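/- Let S be a finite state space, A an S×S real rate matrix with exit rates A_s = -A_{ss}, k₁ > 1, and Ω > 0 with Ω ≥ k₁·max_s A_s. Let B = I + (1/Ω)·A, π₀ a probability vector on S, n ≥ 1, Prior(v) = π₀(v₀)·∏_{i=0}^{n-1} B_{v_i v_{i+1}} for v ∈ S^{n+1}, and L : S^{n+1} → [ℓ,u] with 0 < ℓ ≤ u; set Post(v) = Prior(v)·L(v)/Σ_{v'} Prior(v')·L(v'). Then for every index 0 ≤ i ≤ n-1 and every state s ∈ S, Post(V_i = s and V_{i+1} = s) ≥ (ℓ/u)·(1 - 1/k₁)·Post(V_i = s); i.e., conditioned on the data and on being in state s at step i, the chain stays in s at step i+1 with posterior probability at least δ₁ = (ℓ/u)(1 - 1/k₁). -/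

import Mathlib

open Matrix BigOperators

section AuxMarkov

variable {S : Type*} [Fintype S] [DecidableEq S]

private lemma sum_snoc_aux {N : ℕ} (F : (Fin (N + 1) → S) → ℝ) :
    ∑ v : Fin (N + 1) → S, F v = ∑ w : Fin N → S, ∑ a : S, F (Fin.snoc w a) := by
  rw [← (Fin.snocEquiv (fun _ => S)).sum_comp F, Fintype.sum_prod_type, Finset.sum_comm]
  rfl

private lemma snoc_mk_lt {N : ℕ} (w : Fin N → S) (a : S) (i : ℕ) (h : i < N) (h' : i < N + 1) :
    (Fin.snoc w a : Fin (N + 1) → S) ⟨i, h'⟩ = w ⟨i, h⟩ := by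
  have he : (⟨i, h'⟩ : Fin (N + 1)) = Fin.castSucc ⟨i, h⟩ := rfl
  rw [he, Fin.snoc_castSucc]

private lemma snoc_zero_aux {N : ℕ} (w : Fin (N + 1) → S) (a : S) :
    (Fin.snoc w a : Fin (N + 2) → S) 0 = w 0 := by
  have he : (0 : Fin (N + 2)) = Fin.castSucc 0 := rfl
  rw [he, Fin.snoc_castSucc]

private lemma snoc_prod_aux (B : Matrix S S ℝ) {N : ℕ} (w : Fin (N + 1) → S) (a : S) :
    (∏ j : Fin (N + 1), B ((Fin.snoc w a : Fin (N + 2) → S) j.castSucc)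
        ((Fin.snoc w a : Fin (N + 2) → S) j.succ)) =
      (∏ j : Fin N, B (w j.castSucc) (w j.succ)) * B (w (Fin.last N)) a := by
  rw [Fin.prod_univ_castSucc]
  congr 1
  · refine Finset.prod_congr rfl fun j _ => ?_
    rw [Fin.succ_castSucc j, Fin.snoc_castSucc, Fin.snoc_castSucc]
  · rw [Fin.succ_last, Fin.snoc_castSucc, Fin.snoc_last]

/-- total mass of a Markov chain with row-stochastic transition matrix -/
private lemma chain_sum (B : Matrix S S ℝ) (hBrow : ∀ s, ∑ t, B s t = 1) :
    ∀ (N : ℕ) (ρ : S → ℝ),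
      (∑ v : Fin (N + 1) → S, ρ (v 0) * ∏ j : Fin N, B (v j.castSucc) (v j.succ)) = ∑ t, ρ t := by
  intro N
  induction N with
  | zero =>
    intro ρ
    rw [← (Equiv.funUnique (Fin 1) S).sum_comp ρ]
    refine Finset.sum_congr rfl fun v _ => ?_
    simp
  | succ N IH =>
    intro ρ
    rw [sum_snoc_aux]
    have h1 : ∀ w : Fin (N + 1) → S,
        (∑ a : S, ρ ((Fin.snoc w a : Fin (N + 2) → S) 0) *
          ∏ j : Fin (N + 1), B ((Fin.snoc w a : Fin (N + 2) → S) j.castSucc)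
            ((Fin.snoc w a : Fin (N + 2) → S) j.succ)) =
        ρ (w 0) * ∏ j : Fin N, B (w j.castSucc) (w j.succ) := by
      intro w
      have : ∀ a : S, ρ ((Fin.snoc w a : Fin (N + 2) → S) 0) *
          (∏ j : Fin (N + 1), B ((Fin.snoc w a : Fin (N + 2) → S) j.castSucc)
            ((Fin.snoc w a : Fin (N + 2) → S) j.succ)) =
          ρ (w 0) * (∏ j : Fin N, B (w j.castSucc) (w j.succ)) * B (w (Fin.last N)) a := by
        intro a
        rw [snoc_zero_aux, snoc_prod_aux, mul_assoc]
      rw [Finset.sum_congr rfl fun a _ => this a, ← Finset.mul_sum, hBrow, mul_one]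
    rw [Finset.sum_congr rfl fun w _ => h1 w, IH]

private lemma stepG (B : Matrix S S ℝ) (hBrow : ∀ s, ∑ t, B s t = 1)
    (π₀ c h : S → ℝ) (i N : ℕ) (hiN : i + 1 ≤ N) :
    (∑ v : Fin (N + 2) → S, π₀ (v 0) *
        (∏ j : Fin (N + 1), B (v j.castSucc) (v j.succ)) *
        c (v ⟨i, by omega⟩) * h (v ⟨i + 1, by omega⟩)) =
      ∑ v : Fin (N + 1) → S, π₀ (v 0) *
        (∏ j : Fin N, B (v j.castSucc) (v j.succ)) *
        c (v ⟨i, by omega⟩) * h (v ⟨i + 1, by omega⟩) := by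
  rw [sum_snoc_aux]
  refine Finset.sum_congr rfl fun w _ => ?_
  have key : ∀ a : S, π₀ ((Fin.snoc w a : Fin (N + 2) → S) 0) *
      (∏ j : Fin (N + 1), B ((Fin.snoc w a : Fin (N + 2) → S) j.castSucc)
        ((Fin.snoc w a : Fin (N + 2) → S) j.succ)) *
      c ((Fin.snoc w a : Fin (N + 2) → S) ⟨i, by omega⟩) *
      h ((Fin.snoc w a : Fin (N + 2) → S) ⟨i + 1, by omega⟩) =
      π₀ (w 0) * (∏ j : Fin N, B (w j.castSucc) (w j.succ)) *
        c (w ⟨i, by omega⟩) * h (w ⟨i + 1, by omega⟩) * B (w (Fin.last N)) a := by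
    intro a
    rw [snoc_zero_aux, snoc_prod_aux, snoc_mk_lt w a i (by omega),
      snoc_mk_lt w a (i + 1) (by omega)]
    ring
  rw [Finset.sum_congr rfl fun a _ => key a, ← Finset.mul_sum, hBrow, mul_one]

private lemma stepG1 (B : Matrix S S ℝ) (hBrow : ∀ s, ∑ t, B s t = 1)
    (π₀ : S → ℝ) (s : S) (i N : ℕ) (hiN : i + 1 ≤ N) :
    (∑ v : Fin (N + 2) → S, π₀ (v 0) *
        (∏ j : Fin (N + 1), B (v j.castSucc) (v j.succ)) *
        (if v ⟨i, by omega⟩ = s then (1 : ℝ) else 0) *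
        (if v ⟨i + 1, by omega⟩ = s then (1 : ℝ) else 0)) =
      ∑ v : Fin (N + 1) → S, π₀ (v 0) *
        (∏ j : Fin N, B (v j.castSucc) (v j.succ)) *
        (if v ⟨i, by omega⟩ = s then (1 : ℝ) else 0) *
        (if v ⟨i + 1, by omega⟩ = s then (1 : ℝ) else 0) :=
  stepG B hBrow π₀ (fun t => if t = s then (1 : ℝ) else 0)
    (fun t => if t = s then (1 : ℝ) else 0) i N hiN

private lemma stepG2 (B : Matrix S S ℝ) (hBrow : ∀ s, ∑ t, B s t = 1)
    (π₀ : S → ℝ) (s : S) (i N : ℕ) (hiN : i + 1 ≤ N) :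
    (∑ v : Fin (N + 2) → S, π₀ (v 0) *
        (∏ j : Fin (N + 1), B (v j.castSucc) (v j.succ)) *
        (if v ⟨i, by omega⟩ = s then (1 : ℝ) else 0) *
        (fun _ : S => (1 : ℝ)) (v ⟨i + 1, by omega⟩)) =
      ∑ v : Fin (N + 1) → S, π₀ (v 0) *
        (∏ j : Fin N, B (v j.castSucc) (v j.succ)) *
        (if v ⟨i, by omega⟩ = s then (1 : ℝ) else 0) *
        (fun _ : S => (1 : ℝ)) (v ⟨i + 1, by omega⟩) :=
  stepG B hBrow π₀ (fun t => if t = s then (1 : ℝ) else 0)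
    (fun _ : S => (1 : ℝ)) i N hiN

private lemma baseG (B : Matrix S S ℝ) (hBrow : ∀ s, ∑ t, B s t = 1)
    (π₀ : S → ℝ) (s : S) (i : ℕ) :
    (∑ v : Fin (i + 2) → S, π₀ (v 0) *
        (∏ j : Fin (i + 1), B (v j.castSucc) (v j.succ)) *
        (if v ⟨i, by omega⟩ = s then (1 : ℝ) else 0) *
        (if v ⟨i + 1, by omega⟩ = s then (1 : ℝ) else 0)) =
      B s s * ∑ v : Fin (i + 2) → S, π₀ (v 0) *
        (∏ j : Fin (i + 1), B (v j.castSucc) (v j.succ)) *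
        (if v ⟨i, by omega⟩ = s then (1 : ℝ) else 0) *
        (fun _ : S => (1 : ℝ)) (v ⟨i + 1, by omega⟩) := by
  have hlast : ∀ (w : Fin (i + 1) → S), w (⟨i, by omega⟩ : Fin (i + 1)) = w (Fin.last i) := by
    intro w; rfl
  rw [sum_snoc_aux, sum_snoc_aux (F := fun v : Fin (i + 2) → S => π₀ (v 0) *
        (∏ j : Fin (i + 1), B (v j.castSucc) (v j.succ)) *
        (if v ⟨i, by omega⟩ = s then (1 : ℝ) else 0) *
        (fun _ : S => (1 : ℝ)) (v ⟨i + 1, by omega⟩)), Finset.mul_sum]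
  refine Finset.sum_congr rfl fun w _ => ?_
  have hilast : (⟨i + 1, by omega⟩ : Fin (i + 2)) = Fin.last (i + 1) := rfl
  have hL : ∀ a : S, π₀ ((Fin.snoc w a : Fin (i + 2) → S) 0) *
      (∏ j : Fin (i + 1), B ((Fin.snoc w a : Fin (i + 2) → S) j.castSucc)
        ((Fin.snoc w a : Fin (i + 2) → S) j.succ)) *
      (if (Fin.snoc w a : Fin (i + 2) → S) ⟨i, by omega⟩ = s then (1 : ℝ) else 0) *
      (if (Fin.snoc w a : Fin (i + 2) → S) ⟨i + 1, by omega⟩ = s then (1 : ℝ) else 0) =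
      π₀ (w 0) * (∏ j : Fin i, B (w j.castSucc) (w j.succ)) *
        (if w (Fin.last i) = s then (1 : ℝ) else 0) * (B (w (Fin.last i)) a *
        (if a = s then (1 : ℝ) else 0)) := by
    intro a
    rw [snoc_zero_aux, snoc_prod_aux, snoc_mk_lt w a i (by omega), hilast, Fin.snoc_last,
      hlast w]
    ring
  have hR : ∀ a : S, π₀ ((Fin.snoc w a : Fin (i + 2) → S) 0) *
      (∏ j : Fin (i + 1), B ((Fin.snoc w a : Fin (i + 2) → S) j.castSucc)
        ((Fin.snoc w a : Fin (i + 2) → S) j.succ)) *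
      (if (Fin.snoc w a : Fin (i + 2) → S) ⟨i, by omega⟩ = s then (1 : ℝ) else 0) *
      (fun _ : S => (1 : ℝ)) ((Fin.snoc w a : Fin (i + 2) → S) ⟨i + 1, by omega⟩) =
      π₀ (w 0) * (∏ j : Fin i, B (w j.castSucc) (w j.succ)) *
        (if w (Fin.last i) = s then (1 : ℝ) else 0) * B (w (Fin.last i)) a := by
    intro a
    rw [snoc_zero_aux, snoc_prod_aux, snoc_mk_lt w a i (by omega), hlast w]
    ring
  rw [Finset.sum_congr rfl fun a _ => hL a, Finset.sum_congr rfl fun a _ => hR a,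
    ← Finset.mul_sum, ← Finset.mul_sum]
  have e1 : (∑ a : S, B (w (Fin.last i)) a * if a = s then (1 : ℝ) else 0) =
      B (w (Fin.last i)) s := by simp
  rw [e1, hBrow]
  by_cases hw : w (Fin.last i) = s
  · subst hw; simp only [if_pos rfl, mul_one]; ring
  · simp [hw]

private lemma keyG (B : Matrix S S ℝ) (hBrow : ∀ s, ∑ t, B s t = 1) (s : S) :
    ∀ (n : ℕ) (π₀ : S → ℝ) (i : ℕ) (hi : i + 1 ≤ n),
      (∑ v : Fin (n + 1) → S, π₀ (v 0) *
          (∏ j : Fin n, B (v j.castSucc) (v j.succ)) *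
          (if v ⟨i, by omega⟩ = s then (1 : ℝ) else 0) *
          (if v ⟨i + 1, by omega⟩ = s then (1 : ℝ) else 0)) =
        B s s * ∑ v : Fin (n + 1) → S, π₀ (v 0) *
          (∏ j : Fin n, B (v j.castSucc) (v j.succ)) *
          (if v ⟨i, by omega⟩ = s then (1 : ℝ) else 0) *
          (fun _ : S => (1 : ℝ)) (v ⟨i + 1, by omega⟩) := by
  intro n
  induction n with
  | zero => intro π₀ i hi; omega
  | succ N IH =>
    intro π₀ i hi
    rcases Nat.lt_or_ge (i + 1) (N + 1) with h | h
    · exact (stepG1 B hBrow π₀ s i N (by omega)).trans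
        ((IH π₀ i (by omega)).trans
          (congrArg (fun x => B s s * x) (stepG2 B hBrow π₀ s i N (by omega)).symm))
    · have hN : N = i := by omega
      subst hN
      exact baseG B hBrow π₀ s N

end AuxMarkov

/-- **Corollary 2 of the paper.** In the setting of the uniformized Markov
prior over paths with likelihood bounded in `[ℓ,u]`, for every step `i` and state `s`, the
posterior probability of the event `{Vᵢ = s, V_{i+1} = s}` is at least
`δ₁ = (ℓ/u)·(1 - 1/k₁)` times the posterior probability of `{Vᵢ = s}`. -/
theorem posterior_conditional_self_transition_lower_bound
    {S : Type*} [Fintype S] [DecidableEq S] [Nonempty S]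
    (A : Matrix S S ℝ)
    (hoff : ∀ s t, s ≠ t → 0 ≤ A s t) (hrow : ∀ s, ∑ t, A s t = 0)
    (k₁ Ω : ℝ) (hk₁ : 1 < k₁) (hΩ : 0 < Ω) (hΩmax : ∀ s, k₁ * (-A s s) ≤ Ω)
    (B : Matrix S S ℝ) (hB : B = 1 + Ω⁻¹ • A)
    (π₀ : S → ℝ) (hπ₀ : ∀ s, 0 ≤ π₀ s) (hπ₀1 : ∑ s, π₀ s = 1)
    (n : ℕ) (hn : 1 ≤ n)
    (Prior : (Fin (n + 1) → S) → ℝ)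
    (hPrior : ∀ v, Prior v = π₀ (v 0) * ∏ i : Fin n, B (v i.castSucc) (v i.succ))
    (L : (Fin (n + 1) → S) → ℝ) (ℓ u : ℝ) (hℓ : 0 < ℓ) (hℓu : ℓ ≤ u)
    (hL : ∀ v, ℓ ≤ L v ∧ L v ≤ u)
    (Post : (Fin (n + 1) → S) → ℝ)
    (hPost : ∀ v, Post v = Prior v * L v / ∑ v', Prior v' * L v') :
    ∀ (i : Fin n) (s : S),
      ℓ / u * (1 - 1 / k₁) *
          ∑ v ∈ Finset.univ.filter (fun v : Fin (n + 1) → S => v i.castSucc = s), Post v ≤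
        ∑ v ∈ Finset.univ.filter
            (fun v : Fin (n + 1) → S => v i.castSucc = s ∧ v i.succ = s), Post v := by
  intro i s
  -- basic facts about A and B
  have hAdiag : ∀ t, A t t ≤ 0 := by
    intro t
    have h1 : A t t = -∑ x ∈ Finset.univ.erase t, A t x := by
      have := hrow t
      rw [← Finset.add_sum_erase _ _ (Finset.mem_univ t)] at this
      linarith
    have h2 : 0 ≤ ∑ x ∈ Finset.univ.erase t, A t x :=
      Finset.sum_nonneg fun x hx => hoff t x (Ne.symm (Finset.ne_of_mem_erase hx))
    linarith
  have hk₁0 : (0 : ℝ) < k₁ := by linarith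
  have hBdiag : ∀ t, 1 - 1 / k₁ ≤ B t t := by
    intro t
    have h1 : -A t t ≤ Ω / k₁ := by
      rw [le_div_iff₀ hk₁0]; linarith [hΩmax t]
    have h3 : Ω⁻¹ * (-A t t) ≤ Ω⁻¹ * (Ω / k₁) :=
      mul_le_mul_of_nonneg_left h1 (inv_nonneg.mpr hΩ.le)
    have h4 : Ω⁻¹ * (Ω / k₁) = 1 / k₁ := by field_simp
    have h5 : Ω⁻¹ * (-A t t) = -(Ω⁻¹ * A t t) := by ring
    have h2 : -(1 / k₁) ≤ Ω⁻¹ * A t t := by linarith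
    have hBtt : B t t = 1 + Ω⁻¹ * A t t := by
      rw [hB]; simp [Matrix.add_apply, Matrix.one_apply, Matrix.smul_apply]
    rw [hBtt]; linarith
  have hBnonneg : ∀ t t', 0 ≤ B t t' := by
    intro t t'
    by_cases htt : t = t'
    · subst htt
      have := hBdiag t
      have hk : 1 / k₁ < 1 := by
        rw [div_lt_one hk₁0]; exact hk₁
      linarith
    · have : B t t' = Ω⁻¹ * A t t' := by
        rw [hB]; simp [Matrix.add_apply, Matrix.one_apply, Matrix.smul_apply, htt]
      rw [this]
      exact mul_nonneg (inv_nonneg.mpr hΩ.le) (hoff t t' htt)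
  have hBrow : ∀ t, ∑ t', B t t' = 1 := by
    intro t
    rw [hB]
    simp only [Matrix.add_apply, Matrix.smul_apply, smul_eq_mul]
    rw [Finset.sum_add_distrib, ← Finset.mul_sum, hrow, mul_zero, add_zero]
    simp [Matrix.one_apply]
  have hPriornn : ∀ v, 0 ≤ Prior v := by
    intro v
    rw [hPrior]
    exact mul_nonneg (hπ₀ _) (Finset.prod_nonneg fun j _ => hBnonneg _ _)
  -- total prior mass is 1
  have htot : (∑ v : Fin (n + 1) → S, Prior v) = 1 := by
    rw [Finset.sum_congr rfl fun v _ => hPrior v, chain_sum B hBrow n π₀, hπ₀1]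
  -- denominator
  set D := ∑ v', Prior v' * L v' with hD
  have hDge : ℓ ≤ D := by
    calc ℓ = ℓ * ∑ v : Fin (n + 1) → S, Prior v := by rw [htot, mul_one]
      _ = ∑ v : Fin (n + 1) → S, ℓ * Prior v := Finset.mul_sum _ _ _
      _ ≤ D := Finset.sum_le_sum fun v _ => by
          have := (hL v).1
          nlinarith [hPriornn v, (hL v).1]
  have hD0 : 0 < D := lt_of_lt_of_le hℓ hDge
  -- prior sums
  set P1 := ∑ v ∈ Finset.univ.filter (fun v : Fin (n + 1) → S => v i.castSucc = s), Prior v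
    with hP1
  set P2 := ∑ v ∈ Finset.univ.filter
      (fun v : Fin (n + 1) → S => v i.castSucc = s ∧ v i.succ = s), Prior v with hP2
  have hP1nn : 0 ≤ P1 := Finset.sum_nonneg fun v _ => hPriornn v
  -- the key identity P2 = B s s * P1
  have hkey : P2 = B s s * P1 := by
    have h1 : P2 = ∑ v : Fin (n + 1) → S, π₀ (v 0) *
        (∏ j : Fin n, B (v j.castSucc) (v j.succ)) *
        (if v ⟨i.val, by omega⟩ = s then (1 : ℝ) else 0) *
        (if v ⟨i.val + 1, by omega⟩ = s then (1 : ℝ) else 0) := by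
      rw [hP2, Finset.sum_filter]
      refine Finset.sum_congr rfl fun v _ => ?_
      have e1 : (⟨i.val, by omega⟩ : Fin (n + 1)) = i.castSucc := rfl
      have e2 : (⟨i.val + 1, by omega⟩ : Fin (n + 1)) = i.succ := rfl
      rw [e1, e2, hPrior v]
      by_cases h1 : v i.castSucc = s <;> by_cases h2 : v i.succ = s <;>
        simp [h1, h2]
    have h2 : P1 = ∑ v : Fin (n + 1) → S, π₀ (v 0) *
        (∏ j : Fin n, B (v j.castSucc) (v j.succ)) *
        (if v ⟨i.val, by omega⟩ = s then (1 : ℝ) else 0) *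
        (fun _ : S => (1 : ℝ)) (v ⟨i.val + 1, by omega⟩) := by
      rw [hP1, Finset.sum_filter]
      refine Finset.sum_congr rfl fun v _ => ?_
      have e1 : (⟨i.val, by omega⟩ : Fin (n + 1)) = i.castSucc := rfl
      rw [e1, hPrior v]
      by_cases h1 : v i.castSucc = s <;> simp [h1]
    rw [h1, h2]
    exact keyG B hBrow s n π₀ i.val (by omega)
  -- posterior sums in terms of prior sums
  have hpostsum : ∀ (F : Finset (Fin (n + 1) → S)),
      (∑ v ∈ F, Post v) = (∑ v ∈ F, Prior v * L v) / D := by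
    intro F
    rw [Finset.sum_div]
    exact Finset.sum_congr rfl fun v _ => hPost v
  rw [hpostsum, hpostsum]
  have hT1 : (∑ v ∈ Finset.univ.filter (fun v : Fin (n + 1) → S => v i.castSucc = s),
      Prior v * L v) ≤ u * P1 := by
    rw [hP1, Finset.mul_sum]
    exact Finset.sum_le_sum fun v _ => by nlinarith [hPriornn v, (hL v).2, (hL v).1]
  have hT2 : ℓ * P2 ≤ ∑ v ∈ Finset.univ.filter
      (fun v : Fin (n + 1) → S => v i.castSucc = s ∧ v i.succ = s), Prior v * L v := by
    rw [hP2, Finset.mul_sum]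
    exact Finset.sum_le_sum fun v _ => by nlinarith [hPriornn v, (hL v).1]
  have hu0 : (0 : ℝ) < u := lt_of_lt_of_le hℓ hℓu
  have hδnn : 0 ≤ ℓ / u * (1 - 1 / k₁) := by
    have hk : 1 / k₁ < 1 := by rw [div_lt_one hk₁0]; exact hk₁
    exact mul_nonneg (div_nonneg hℓ.le hu0.le) (by linarith)
  have chain : ℓ / u * (1 - 1 / k₁) *
      (∑ v ∈ Finset.univ.filter (fun v : Fin (n + 1) → S => v i.castSucc = s),
        Prior v * L v) ≤
      ∑ v ∈ Finset.univ.filter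
        (fun v : Fin (n + 1) → S => v i.castSucc = s ∧ v i.succ = s), Prior v * L v := by
    have c1 : ℓ / u * (1 - 1 / k₁) *
        (∑ v ∈ Finset.univ.filter (fun v : Fin (n + 1) → S => v i.castSucc = s),
          Prior v * L v) ≤ ℓ / u * (1 - 1 / k₁) * (u * P1) :=
      mul_le_mul_of_nonneg_left hT1 hδnn
    have c2 : ℓ / u * (1 - 1 / k₁) * (u * P1) = ℓ * (1 - 1 / k₁) * P1 := by
      field_simp
    have c3 : ℓ * (1 - 1 / k₁) * P1 ≤ ℓ * (B s s * P1) := by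
      have := mul_le_mul_of_nonneg_left
        (mul_le_mul_of_nonneg_right (hBdiag s) hP1nn) hℓ.le
      linarith [this]
    have c4 : ℓ * (B s s * P1) = ℓ * P2 := by rw [hkey]
    linarith
  rw [← mul_div_assoc, div_le_div_iff₀ hD0 hD0]
  nlinarith [chain, hD0]
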